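/- Let x ≥ 2 and q ≥ 1 be integers and let n be an integer with n ≥ x²·q·(q+2). Then the number of multisets S = {V₁,…,V_q} of cardinality q whose elements are x-element subsets of [n], and which have the property that for every j ∈ {1,…,q} there exists i ≠ j with |V_i ∩ V_j| ≥ 2, is at most 2·n^{xq−q}·(x²/x!)^q. -/

import Mathlib

open Finset

section helpers
variable {A B : Type*}

lemma nat_card_le_of_section [Finite B] (F : A → B) (G : B → A)
    (h : ∀ a, G (F a) = a) : Nat.card A ≤ Nat.card B :=
  Nat.card_le_card_of_injective F (Function.LeftInverse.injective h)

lemma nat_card_sigma {ι : Type*} [Fintype ι] (F : ι → Type*) [∀ i, Finite (F i)] :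
    Nat.card (Σ i, F i) = ∑ i, Nat.card (F i) := by
  letI := fun i => Fintype.ofFinite (F i)
  simp [Nat.card_eq_fintype_card, Fintype.card_sigma]

lemma nat_card_le_mul_of_fibers [Finite A] [Finite B] (F : A → B) (m : ℕ)
    (h : ∀ b, Nat.card {a // F a = b} ≤ m) : Nat.card A ≤ Nat.card B * m := by
  classical
  letI := Fintype.ofFinite B
  have e : (Σ b : B, {a // F a = b}) ≃ A := Equiv.sigmaFiberEquiv F
  rw [← Nat.card_congr e, nat_card_sigma]
  calc ∑ b : B, Nat.card {a // F a = b} ≤ ∑ _b : B, m := Finset.sum_le_sum (fun b _ => h b)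
    _ = Fintype.card B * m := by rw [Finset.sum_const, card_univ, smul_eq_mul]
    _ = Nat.card B * m := by rw [Nat.card_eq_fintype_card]
end helpers

namespace Overlap

variable {n x : ℕ}

def rel (V W : Finset (Fin n)) : Prop := 2 ≤ (V ∩ W).card
lemma rel_symm {V W : Finset (Fin n)} (h : rel V W) : rel W V := by
  unfold rel at *; rwa [Finset.inter_comm]
lemma rel_self {V : Finset (Fin n)} (h : 2 ≤ V.card) : rel V V := by
  unfold rel; rwa [Finset.inter_self]
def linked (S : Multiset (Finset (Fin n))) : Prop :=
  ∀ V ∈ S, ∃ W ∈ S.erase V, rel V W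
def sized (x : ℕ) (S : Multiset (Finset (Fin n))) : Prop := ∀ V ∈ S, V.card = x
def cr (c : Multiset (Finset (Fin n))) (A B : Finset (Fin n)) : Prop :=
  A ∈ c ∧ B ∈ c ∧ rel A B
def conn (c : Multiset (Finset (Fin n))) : Prop :=
  ∃ V₀ ∈ c, ∀ V ∈ c, Relation.ReflTransGen (cr c) V₀ V

lemma two_le_card_of_mem_erase {S : Multiset (Finset (Fin n))} {V W : Finset (Fin n)}
    (hV : V ∈ S) (hW : W ∈ S.erase V) : 2 ≤ Multiset.card S := by
  rcases eq_or_ne W V with rfl | hne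
  · have h1 : 1 ≤ Multiset.count W (S.erase W) := Multiset.one_le_count_iff_mem.2 hW
    rw [Multiset.count_erase_self] at h1
    have h2 : 2 ≤ Multiset.count W S := by omega
    calc 2 ≤ Multiset.count W S := h2
      _ ≤ Multiset.card S := Multiset.count_le_card _ _
  · have hWS : W ∈ S := Multiset.mem_of_mem_erase hW
    have : V ∈ S.erase W := (Multiset.mem_erase_of_ne (by exact fun h => hne h.symm)).2 hV
    have h1 : 1 ≤ Multiset.card (S.erase W) :=
      (Multiset.one_le_count_iff_mem.2 this).trans (Multiset.count_le_card _ _)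
    have h2 := Multiset.card_erase_add_one hWS
    omega

lemma decomp (hx : 2 ≤ x) {S : Multiset (Finset (Fin n))} (hS : S ≠ 0)
    (hsz : sized x S) (hl : linked S) :
    ∃ c t : Multiset (Finset (Fin n)), S = c + t ∧ conn c ∧ 2 ≤ Multiset.card c ∧
      sized x c ∧ sized x t ∧ linked t := by
  classical
  rcases Multiset.exists_mem_of_ne_zero hS with ⟨V₀, hV₀⟩
  set R : Finset (Fin n) → Finset (Fin n) → Prop :=
    fun A B => A ∈ S ∧ B ∈ S ∧ rel A B with hR
  set reach : Finset (Fin n) → Prop := fun W => Relation.ReflTransGen R V₀ W with hreach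
  set c : Multiset (Finset (Fin n)) := S.filter reach with hc
  set t : Multiset (Finset (Fin n)) := S.filter (fun W => ¬ reach W) with ht
  have hsplit : S = c + t := (Multiset.filter_add_not reach S).symm
  have hme : ∀ {W}, W ∈ c → W ∈ S ∧ reach W := by
    intro W hW; exact ⟨Multiset.mem_of_mem_filter hW, (Multiset.mem_filter.1 hW).2⟩
  have hmt : ∀ {W}, W ∈ t → W ∈ S ∧ ¬ reach W := by
    intro W hW; exact ⟨Multiset.mem_of_mem_filter hW, (Multiset.mem_filter.1 hW).2⟩
  have hV₀c : V₀ ∈ c := Multiset.mem_filter.2 ⟨hV₀, Relation.ReflTransGen.refl⟩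
  -- connectivity within c
  have hconn : conn c := by
    refine ⟨V₀, hV₀c, ?_⟩
    intro V hV
    have hrV : reach V := (hme hV).2
    clear hV
    induction hrV with
    | refl => exact Relation.ReflTransGen.refl
    | tail hp hstep ih =>
      rename_i U W
      have hUc : U ∈ c := Multiset.mem_filter.2 ⟨hstep.1, hp⟩
      have hWc : W ∈ c := Multiset.mem_filter.2 ⟨hstep.2.1, hp.tail hstep⟩
      exact ih.tail ⟨hUc, hWc, hstep.2.2⟩
  -- card c ≥ 2
  have hcard : 2 ≤ Multiset.card c := by
    rcases hl V₀ hV₀ with ⟨W, hWe, hrel⟩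
    have hWS : W ∈ S := Multiset.mem_of_mem_erase hWe
    have hreachW : reach W := Relation.ReflTransGen.single ⟨hV₀, hWS, hrel⟩
    rcases eq_or_ne W V₀ with rfl | hne
    · have h1 : 1 ≤ Multiset.count W (S.erase W) := Multiset.one_le_count_iff_mem.2 hWe
      rw [Multiset.count_erase_self] at h1
      have h2 : 2 ≤ Multiset.count W S := by omega
      have : Multiset.count W c = Multiset.count W S := by
        rw [hc, Multiset.count_filter_of_pos hreachW]
      calc 2 ≤ Multiset.count W c := by omega
        _ ≤ Multiset.card c := Multiset.count_le_card _ _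
    · have hWc : W ∈ c := Multiset.mem_filter.2 ⟨hWS, hreachW⟩
      exact two_le_card_of_mem_erase hWc ((Multiset.mem_erase_of_ne (fun h => hne h.symm)).2 hV₀c)
  -- linked t
  have hlt : linked t := by
    intro V hV
    obtain ⟨hVS, hnr⟩ := hmt hV
    rcases hl V hVS with ⟨W, hWe, hrel⟩
    have hWS : W ∈ S := Multiset.mem_of_mem_erase hWe
    have hnrW : ¬ reach W := by
      intro hrw
      exact hnr (hrw.tail ⟨hWS, hVS, rel_symm hrel⟩)
    rcases eq_or_ne W V with rfl | hne
    · have h1 : 1 ≤ Multiset.count W (S.erase W) := Multiset.one_le_count_iff_mem.2 hWe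
      rw [Multiset.count_erase_self] at h1
      have h2 : 2 ≤ Multiset.count W S := by omega
      have hct : Multiset.count W t = Multiset.count W S :=
        Multiset.count_filter_of_pos (p := fun W => ¬ reach W) hnrW
      refine ⟨W, ?_, hrel⟩
      rw [← Multiset.one_le_count_iff_mem, Multiset.count_erase_self]
      omega
    · have hWt : W ∈ t := Multiset.mem_filter.2 ⟨hWS, hnrW⟩
      exact ⟨W, (Multiset.mem_erase_of_ne hne).2 hWt, hrel⟩
  exact ⟨c, t, hsplit, hconn, hcard,
    fun V hV => hsz V (hme hV).1, fun V hV => hsz V (hmt hV).1, hlt⟩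

def treeOrd (l : List (Finset (Fin n))) : Prop :=
  ∀ i, i < l.length → 0 < i → ∃ j, j < i ∧ rel (l.getD j ∅) (l.getD i ∅)

lemma grow (hx : 2 ≤ x) (V₀ : Finset (Fin n)) (c : Multiset (Finset (Fin n)))
    (hsz : sized x c)
    (hconn : ∀ V ∈ c, Relation.ReflTransGen (cr c) V₀ V) :
    ∀ m (rest : Multiset (Finset (Fin n))) (done : List (Finset (Fin n))),
      Multiset.card rest = m → done ≠ [] → V₀ ∈ (done : Multiset (Finset (Fin n))) →
      (done : Multiset (Finset (Fin n))) + rest = c → treeOrd done →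
      ∃ l : List (Finset (Fin n)), (l : Multiset (Finset (Fin n))) = c ∧ treeOrd l := by
  intro m
  induction m with
  | zero =>
    intro rest done hm _ _ hsum htree
    have : rest = 0 := Multiset.card_eq_zero.1 hm
    exact ⟨done, by simpa [this] using hsum, htree⟩
  | succ m ih =>
    intro rest done hm hne hV₀ hsum htree
    -- find V ∈ rest adjacent to an entry of done
    have hfind : ∃ V ∈ rest, ∃ j < done.length, rel (done.getD j ∅) V := by
      have hrne : rest ≠ 0 := by
        intro h; rw [h] at hm; simp at hm
      rcases Multiset.exists_mem_of_ne_zero hrne with ⟨W, hW⟩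
      have hWc : W ∈ c := by rw [← hsum]; exact Multiset.mem_add.2 (Or.inr hW)
      -- claim: every vertex reachable from V₀ is in done, or we can find an adjacent pair
      have claim : ∀ U, Relation.ReflTransGen (cr c) V₀ U →
          U ∈ (done : Multiset (Finset (Fin n))) ∨
          ∃ V ∈ rest, ∃ j < done.length, rel (done.getD j ∅) V := by
        intro U hU
        induction hU with
        | refl => exact Or.inl hV₀
        | tail hp hstep ihp =>
          rename_i P U
          rcases ihp with hPd | hfound
          · rcases hstep with ⟨hPc, hUc, hrelPU⟩
            by_cases hUd : U ∈ (done : Multiset (Finset (Fin n)))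
            · exact Or.inl hUd
            · have hUrest : U ∈ rest := by
                have := hUc; rw [← hsum] at this
                rcases Multiset.mem_add.1 this with h | h
                · exact absurd h hUd
                · exact h
              have hPd' : P ∈ done := by exact_mod_cast hPd
              rcases List.mem_iff_getElem.1 hPd' with ⟨j, hj, hPj⟩
              refine Or.inr ⟨U, hUrest, j, hj, ?_⟩
              rw [List.getD_eq_getElem done ∅ hj, hPj]
              exact hrelPU
          · exact Or.inr hfound
      rcases claim W (hconn W hWc) with hWd | hfound
      · -- W's value occurs in done; use rel W W
        have hWd' : W ∈ done := by exact_mod_cast hWd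
        rcases List.mem_iff_getElem.1 hWd' with ⟨j, hj, hWj⟩
        refine ⟨W, hW, j, hj, ?_⟩
        rw [List.getD_eq_getElem done ∅ hj, hWj]
        exact rel_self (by rw [hsz W hWc]; exact hx)
      · exact hfound
    rcases hfind with ⟨V, hV, j, hj, hrel⟩
    -- extend done by V
    have hcoe : ((done ++ [V] : List (Finset (Fin n))) : Multiset (Finset (Fin n)))
        = ↑done + {V} := by
      rw [← Multiset.coe_singleton, ← Multiset.coe_add]
    refine ih (rest.erase V) (done ++ [V]) ?_ (by simp) ?_ ?_ ?_
    · rw [Multiset.card_erase_of_mem hV, hm]; rfl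
    · rw [hcoe]
      exact Multiset.mem_add.2 (Or.inl hV₀)
    · rw [hcoe, add_assoc, Multiset.singleton_add, Multiset.cons_erase hV]
      exact hsum
    · intro i hi hipos
      rw [List.length_append, List.length_singleton] at hi
      rcases Nat.lt_or_ge i done.length with hilt | hige
      · rcases htree i hilt hipos with ⟨j', hj', hrel'⟩
        refine ⟨j', hj', ?_⟩
        rw [List.getD_append _ _ _ _ (hj'.trans hilt), List.getD_append _ _ _ _ hilt]
        exact hrel'
      · have hieq : i = done.length := by omega
        refine ⟨j, by omega, ?_⟩
        have h1 : (done ++ [V]).getD j ∅ = done.getD j ∅ :=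
          List.getD_append _ _ _ _ hj
        have h2 : (done ++ [V]).getD i ∅ = V := by
          subst hieq
          rw [List.getD_eq_getElem _ _ (by simp)]
          simp
        rw [h1, h2]
        exact hrel
  
lemma exists_cert (hx : 2 ≤ x) {c : Multiset (Finset (Fin n))} (hsz : sized x c)
    (hc : conn c) :
    ∃ l : List (Finset (Fin n)), (l : Multiset (Finset (Fin n))) = c ∧ treeOrd l := by
  rcases hc with ⟨V₀, hV₀, hconn⟩
  refine grow hx V₀ c hsz hconn (Multiset.card (c.erase V₀)) (c.erase V₀) [V₀] rfl
    (by simp) (by simp) ?_ ?_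
  · rw [Multiset.coe_singleton, Multiset.singleton_add, Multiset.cons_erase hV₀]
  · intro i hi hipos
    simp at hi
    omega

lemma card_sized_subtype :
    Nat.card {V : Finset (Fin n) // V.card = x} = Nat.choose n x := by
  rw [Nat.card_eq_fintype_card, Fintype.card_subtype]
  have : (univ.filter (fun V : Finset (Fin n) => V.card = x)) = Finset.powersetCard x univ := by
    rw [Finset.powersetCard_eq_filter, Finset.powerset_univ]
  rw [this, Finset.card_powersetCard, Finset.card_univ, Fintype.card_fin]

lemma rel_count (V : Finset (Fin n)) (hV : V.card = x) :
    Nat.card {W : Finset (Fin n) // W.card = x ∧ rel V W}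
      ≤ Nat.choose x 2 * Nat.choose (n - 2) (x - 2) := by
  classical
  set T := Σ P : {P // P ∈ Finset.powersetCard 2 V},
      {D // D ∈ Finset.powersetCard (x - 2) (P.1)ᶜ} with hT
  have hF : ∀ W : {W : Finset (Fin n) // W.card = x ∧ rel V W},
      ∃ P : Finset (Fin n), P ⊆ V ∩ W.1 ∧ P.card = 2 :=
    fun W => Finset.exists_subset_card_eq W.2.2
  choose P hPsub hPcard using hF
  have hPV : ∀ W, P W ⊆ V := fun W => (hPsub W).trans Finset.inter_subset_left
  have hPW : ∀ W, P W ⊆ W.1 := fun W => (hPsub W).trans Finset.inter_subset_right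
  set F : {W : Finset (Fin n) // W.card = x ∧ rel V W} → T := fun W =>
    ⟨⟨P W, Finset.mem_powersetCard.2 ⟨hPV W, hPcard W⟩⟩,
     ⟨W.1 \ P W, Finset.mem_powersetCard.2 ⟨by
        intro a ha
        simp only [Finset.mem_compl]
        exact fun hc => (Finset.mem_sdiff.1 ha).2 hc,
      by rw [Finset.card_sdiff_of_subset (hPW W), W.2.1, hPcard W]⟩⟩⟩ with hFdef
  have hinj : Function.Injective F := by
    intro W₁ W₂ h
    have h1 : P W₁ = P W₂ := congrArg (fun t => t.1.1) h
    have h2 : W₁.1 \ P W₁ = W₂.1 \ P W₂ :=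
      congrArg (fun t : T => t.2.1) h
    apply Subtype.ext
    calc W₁.1 = (W₁.1 \ P W₁) ∪ P W₁ := (Finset.sdiff_union_of_subset (hPW W₁)).symm
      _ = (W₂.1 \ P W₂) ∪ P W₂ := by rw [h2, h1]
      _ = W₂.1 := Finset.sdiff_union_of_subset (hPW W₂)
  calc Nat.card {W : Finset (Fin n) // W.card = x ∧ rel V W}
      ≤ Nat.card T := Nat.card_le_card_of_injective F hinj
    _ = ∑ Q : {P // P ∈ Finset.powersetCard 2 V},
          Nat.card {D // D ∈ Finset.powersetCard (x - 2) (Q.1)ᶜ} := nat_card_sigma _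
    _ ≤ ∑ Q : {P // P ∈ Finset.powersetCard 2 V}, Nat.choose (n - 2) (x - 2) := by
        refine Finset.sum_le_sum (fun Q _ => ?_)
        rw [Nat.card_eq_fintype_card, Fintype.card_coe, Finset.card_powersetCard,
          Finset.card_compl, Fintype.card_fin,
          (Finset.mem_powersetCard.1 Q.2).2]
    _ = Nat.choose x 2 * Nat.choose (n - 2) (x - 2) := by
        rw [Finset.sum_const, Finset.card_univ, Fintype.card_coe,
          Finset.card_powersetCard, hV, smul_eq_mul]

def Par (k : ℕ) := ∀ i : Fin k, Fin (max i.1 1)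

instance (k : ℕ) : Fintype (Par k) := by unfold Par; infer_instance

lemma card_Par (k : ℕ) : Fintype.card (Par k) = Nat.factorial (k - 1) := by
  induction k with
  | zero => simp [Par]
  | succ k ih =>
    have h : Fintype.card (Par (k+1)) = Fintype.card (Par k) * (max k 1) := by
      rw [show Fintype.card (Par (k+1)) = ∏ i : Fin (k+1), (max i.1 1) from by
        simp [Par, Fintype.card_pi]]
      rw [Fin.prod_univ_castSucc]
      congr 1
      · rw [show Fintype.card (Par k) = ∏ i : Fin k, (max i.1 1) from by
          simp [Par, Fintype.card_pi]]
        exact Finset.prod_congr rfl (fun i _ => by rw [Fin.coe_castSucc])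
    rw [h, ih]
    rcases Nat.eq_zero_or_pos k with rfl | hk
    · simp
    · rw [Nat.succ_sub_one, max_eq_left hk, Nat.sub_one]
      rcases Nat.exists_eq_succ_of_ne_zero (Nat.pos_iff_ne_zero.1 hk) with ⟨m, rfl⟩
      simp [Nat.factorial_succ, Nat.mul_comm]

def emb {k : ℕ} (i : Fin k) (j : Fin (max i.1 1)) : Fin k :=
  ⟨j.1, by have h1 := j.2; have h2 := i.2; omega⟩


def CTp (n x k : ℕ) (p : Par k) :=
  {f : Fin k → Finset (Fin n) //
    (∀ i, (f i).card = x) ∧ ∀ i : Fin k, 0 < i.1 → rel (f (emb i (p i))) (f i)}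

instance (n x k : ℕ) (p : Par k) : Finite (CTp n x k p) := by
  unfold CTp; infer_instance

lemma card_CTp (k : ℕ) (hk : 1 ≤ k) :
    ∀ p : Par k, Nat.card (CTp n x k p) ≤
      Nat.choose n x * (Nat.choose x 2 * Nat.choose (n - 2) (x - 2)) ^ (k - 1) := by
  induction k, hk using Nat.le_induction with
  | base =>
    intro p
    have e : CTp n x 1 p ≃ {V : Finset (Fin n) // V.card = x} := by
      refine ⟨fun f => ⟨f.1 0, f.2.1 0⟩,
        fun V => ⟨fun _ => V.1, fun _ => V.2, fun i hi => absurd hi (by omega)⟩, ?_, ?_⟩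
      · intro f
        apply Subtype.ext
        funext i
        have : i = 0 := Subsingleton.elim _ _
        rw [this]
      · intro V; rfl
    rw [Nat.card_congr e, card_sized_subtype]
    simp
  | succ k hk ih =>
    intro p
    set p' : Par k := fun i => p i.castSucc with hp'
    set ρ : CTp n x (k+1) p → CTp n x k p' := fun f =>
      ⟨fun i => f.1 i.castSucc, fun i => f.2.1 _, by
        intro i hi
        have h := f.2.2 i.castSucc (by exact hi)
        have he : emb i.castSucc (p i.castSucc) = (emb i (p' i)).castSucc := Fin.ext rfl
        rw [he] at h
        exact h⟩ with hρ
    have hfib : ∀ g : CTp n x k p', Nat.card {f // ρ f = g} ≤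
        Nat.choose x 2 * Nat.choose (n - 2) (x - 2) := by
      intro g
      have hjl : (p (Fin.last k)).1 < k := by
        have := (p (Fin.last k)).2
        simp only [Fin.val_last] at this
        omega
      set jl : Fin k := ⟨(p (Fin.last k)).1, hjl⟩ with hjldef
      set Ψ : {f // ρ f = g} → {W : Finset (Fin n) // W.card = x ∧ rel (g.1 jl) W} :=
        fun f => ⟨f.1.1 (Fin.last k), f.1.2.1 _, by
          have h := f.1.2.2 (Fin.last k) (by simp [Fin.val_last]; omega)
          have he : emb (Fin.last k) (p (Fin.last k)) = jl.castSucc := Fin.ext rfl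
          rw [he] at h
          have : f.1.1 jl.castSucc = g.1 jl :=
            congrFun (congrArg Subtype.val f.2) jl
          rwa [this] at h⟩ with hΨ
      have hinj : Function.Injective Ψ := by
        intro f₁ f₂ h
        have hlast : f₁.1.1 (Fin.last k) = f₂.1.1 (Fin.last k) := congrArg Subtype.val h
        apply Subtype.ext
        apply Subtype.ext
        funext i
        refine Fin.lastCases ?_ ?_ i
        · exact hlast
        · intro j
          have : (ρ f₁.1).1 j = (ρ f₂.1).1 j := by rw [f₁.2, f₂.2]
          exact this
      calc Nat.card {f // ρ f = g} ≤ _ := Nat.card_le_card_of_injective Ψ hinj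
        _ ≤ _ := rel_count (g.1 jl) (g.2.1 jl)
    calc Nat.card (CTp n x (k+1) p)
        ≤ Nat.card (CTp n x k p') * (Nat.choose x 2 * Nat.choose (n - 2) (x - 2)) :=
          nat_card_le_mul_of_fibers ρ _ hfib
      _ ≤ (Nat.choose n x * (Nat.choose x 2 * Nat.choose (n - 2) (x - 2)) ^ (k - 1)) *
            (Nat.choose x 2 * Nat.choose (n - 2) (x - 2)) :=
          Nat.mul_le_mul_right _ (ih p')
      _ = Nat.choose n x * (Nat.choose x 2 * Nat.choose (n - 2) (x - 2)) ^ (k + 1 - 1) := by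
          rw [mul_assoc, ← pow_succ]
          congr 2
          omega

def CT (n x k : ℕ) :=
  {f : Fin k → Finset (Fin n) //
    (∀ i, (f i).card = x) ∧ ∀ i : Fin k, 0 < i.1 → ∃ j : Fin k, j.1 < i.1 ∧ rel (f j) (f i)}

instance (n x k : ℕ) : Finite (CT n x k) := by unfold CT; infer_instance

lemma card_CT (k : ℕ) (hk : 1 ≤ k) :
    Nat.card (CT n x k) ≤ Nat.factorial (k - 1) *
      (Nat.choose n x * (Nat.choose x 2 * Nat.choose (n - 2) (x - 2)) ^ (k - 1)) := by
  classical
  set Φ : CT n x k → Σ p : Par k, CTp n x k p := fun f =>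
    ⟨fun i => if h : 0 < i.1 then
        ⟨(Classical.choose (f.2.2 i h)).1, by
          have := (Classical.choose_spec (f.2.2 i h)).1
          have h2 := i.2
          omega⟩
      else ⟨0, by omega⟩,
     ⟨f.1, f.2.1, by
        intro i hi
        have hspec := Classical.choose_spec (f.2.2 i hi)
        have he : emb i (dite (0 < i.1) (fun h =>
            (⟨(Classical.choose (f.2.2 i h)).1, by
              have := (Classical.choose_spec (f.2.2 i h)).1
              have h2 := i.2
              omega⟩ : Fin (max i.1 1))) (fun _ => ⟨0, by omega⟩))
            = Classical.choose (f.2.2 i hi) := by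
          rw [dif_pos hi]
          exact Fin.ext rfl
        rw [he]
        exact hspec.2⟩⟩ with hΦ
  have hinj : Function.Injective Φ := by
    intro f₁ f₂ h
    have : f₁.1 = f₂.1 := congrArg (fun t : Σ p : Par k, CTp n x k p => t.2.1) h
    exact Subtype.ext this
  calc Nat.card (CT n x k) ≤ Nat.card (Σ p : Par k, CTp n x k p) :=
        Nat.card_le_card_of_injective Φ hinj
    _ = ∑ p : Par k, Nat.card (CTp n x k p) := nat_card_sigma _
    _ ≤ ∑ _p : Par k, Nat.choose n x * (Nat.choose x 2 * Nat.choose (n - 2) (x - 2)) ^ (k - 1) :=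
        Finset.sum_le_sum (fun p _ => card_CTp k hk p)
    _ = _ := by rw [Finset.sum_const, Finset.card_univ, card_Par, smul_eq_mul]



lemma finite_multiset_subtype (P : Multiset (Finset (Fin n)) → Prop) (k : ℕ) :
    Finite {S : Multiset (Finset (Fin n)) // Multiset.card S = k ∧ P S} := by
  classical
  refine Finite.of_injective
    (fun S : {S : Multiset (Finset (Fin n)) // Multiset.card S = k ∧ P S} =>
      (fun i : Fin k => S.1.toList.getD i ∅)) ?_
  intro a b h
  apply Subtype.ext
  have la : a.1.toList.length = k := by rw [Multiset.length_toList, a.2.1]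
  have lb : b.1.toList.length = k := by rw [Multiset.length_toList, b.2.1]
  have hl : a.1.toList = b.1.toList := by
    apply List.ext_getElem (by rw [la, lb])
    intro i h1 h2
    have hc : a.1.toList.getD i ∅ = b.1.toList.getD i ∅ := congrFun h ⟨i, by omega⟩
    rwa [List.getD_eq_getElem _ _ h1, List.getD_eq_getElem _ _ h2] at hc
  calc a.1 = ↑a.1.toList := (Multiset.coe_toList _).symm
    _ = ↑b.1.toList := by rw [hl]
    _ = b.1 := Multiset.coe_toList _

def Comp (n x k : ℕ) :=
  {c : Multiset (Finset (Fin n)) // Multiset.card c = k ∧ (sized x c ∧ conn c)}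

def Good (n x j : ℕ) :=
  {S : Multiset (Finset (Fin n)) // Multiset.card S = j ∧ (sized x S ∧ linked S)}

instance (n x k : ℕ) : Finite (Comp n x k) := finite_multiset_subtype _ k
instance (n x j : ℕ) : Finite (Good n x j) := finite_multiset_subtype _ j

lemma comp_le_CT (hx : 2 ≤ x) (k : ℕ) :
    Nat.card (Comp n x k) ≤ Nat.card (CT n x k) := by
  classical
  set ψ : CT n x k → Multiset (Finset (Fin n)) := fun f => ↑(List.ofFn f.1) with hψ
  have hexists : ∀ c : Comp n x k, ∃ f : CT n x k, ψ f = c.1 := by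
    rintro ⟨c, hck, hsz, hconn⟩
    obtain ⟨l, hl, htree⟩ := exists_cert hx hsz hconn
    have hlen : l.length = k := by
      rw [← hck, ← hl]; rfl
    subst hlen
    refine ⟨⟨l.get, ?_, ?_⟩, ?_⟩
    · intro i
      exact hsz _ (by rw [← hl]; exact Multiset.mem_coe.2 (List.get_mem l i))
    · intro i hi
      rcases htree i.1 i.2 hi with ⟨j, hj, hrel⟩
      refine ⟨⟨j, lt_trans hj i.2⟩, hj, ?_⟩
      rwa [List.getD_eq_getElem _ _ (lt_trans hj i.2), List.getD_eq_getElem _ _ i.2] at hrel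
    · show (↑(List.ofFn l.get) : Multiset (Finset (Fin n))) = c
      rw [List.ofFn_get, hl]
  choose F hF using hexists
  refine Nat.card_le_card_of_injective F ?_
  intro c₁ c₂ h
  apply Subtype.ext
  rw [← hF c₁, ← hF c₂, h]


lemma good_rec (hx : 2 ≤ x) (j : ℕ) (hj : 1 ≤ j) :
    Nat.card (Good n x j) ≤
      ∑ k ∈ Finset.Icc 2 j, Nat.card (Comp n x k) * Nat.card (Good n x (j - k)) := by
  classical
  set T := Σ k : {k : ℕ // k ∈ Finset.Icc 2 j}, Comp n x k.1 × Good n x (j - k.1) with hT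
  have hdec : ∀ S : Good n x j, ∃ c t : Multiset (Finset (Fin n)),
      S.1 = c + t ∧ conn c ∧ 2 ≤ Multiset.card c ∧ sized x c ∧ sized x t ∧ linked t := by
    rintro ⟨S, hcard, hsz, hl⟩
    have hS0 : S ≠ 0 := by
      intro h; rw [h] at hcard; simp at hcard; omega
    exact decomp hx hS0 hsz hl
  choose C Tr h1 h2 h3 h4 h5 h6 using hdec
  have hkmem : ∀ S : Good n x j, Multiset.card (C S) ∈ Finset.Icc 2 j := by
    intro S
    refine Finset.mem_Icc.2 ⟨h3 S, ?_⟩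
    have := congrArg Multiset.card (h1 S)
    rw [Multiset.card_add, S.2.1] at this
    omega
  have htr : ∀ S : Good n x j, Multiset.card (Tr S) = j - Multiset.card (C S) := by
    intro S
    have := congrArg Multiset.card (h1 S)
    rw [Multiset.card_add, S.2.1] at this
    omega
  set Φ : Good n x j → T := fun S =>
    ⟨⟨Multiset.card (C S), hkmem S⟩,
      ⟨C S, rfl, h4 S, h2 S⟩, ⟨Tr S, htr S, h5 S, h6 S⟩⟩ with hΦ
  have hinj : Function.Injective Φ := by
    intro S₁ S₂ h
    have hc : C S₁ = C S₂ := congrArg (fun t : T => t.2.1.1) h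
    have ht : Tr S₁ = Tr S₂ := congrArg (fun t : T => t.2.2.1) h
    apply Subtype.ext
    rw [h1 S₁, h1 S₂, hc, ht]
  calc Nat.card (Good n x j) ≤ Nat.card T := Nat.card_le_card_of_injective Φ hinj
    _ = ∑ k : {k : ℕ // k ∈ Finset.Icc 2 j},
          Nat.card (Comp n x k.1 × Good n x (j - k.1)) := nat_card_sigma _
    _ = ∑ k : {k : ℕ // k ∈ Finset.Icc 2 j},
          Nat.card (Comp n x k.1) * Nat.card (Good n x (j - k.1)) := by
        refine Finset.sum_congr rfl (fun k _ => ?_)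
        rw [Nat.card_prod]
    _ = ∑ k ∈ Finset.Icc 2 j, Nat.card (Comp n x k) * Nat.card (Good n x (j - k)) := by
        rw [← Finset.sum_coe_sort (Finset.Icc 2 j)
          (fun k => Nat.card (Comp n x k) * Nat.card (Good n x (j - k)))]

lemma good_one : Nat.card (Good n x 1) = 0 := by
  rw [Nat.card_eq_zero]
  left
  constructor
  rintro ⟨S, hcard, _, hl⟩
  rcases Multiset.card_eq_one.1 hcard with ⟨V, rfl⟩
  rcases hl V (by simp) with ⟨W, hW, _⟩
  simp at hW

lemma good_zero : Nat.card (Good n x 0) = 1 := by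
  rw [Nat.card_eq_one_iff_unique]
  constructor
  · constructor
    rintro ⟨S₁, h₁, _⟩ ⟨S₂, h₂, _⟩
    apply Subtype.ext
    show S₁ = S₂
    rw [Multiset.card_eq_zero.1 h₁, Multiset.card_eq_zero.1 h₂]
  · exact ⟨⟨0, rfl, fun V h => absurd h (by simp), fun V h => absurd h (by simp)⟩⟩

-- (k-1)! ≤ q^(k-2) for 2 ≤ k ≤ q
lemma fact_le_pow (q : ℕ) : ∀ k, 2 ≤ k → k ≤ q → Nat.factorial (k-1) ≤ q^(k-2) := by
  intro k hk
  induction k, hk using Nat.le_induction with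
  | base => intro _; simp
  | succ k hk ih =>
    intro hkq
    have h1 : Nat.factorial (k+1-1) = k * Nat.factorial (k-1) := by
      rcases Nat.exists_eq_succ_of_ne_zero (by omega : k ≠ 0) with ⟨m, rfl⟩
      simp [Nat.factorial_succ]
    rw [h1]
    have h2 : q^(k+1-2) = q * q^(k-2) := by
      rw [show k+1-2 = (k-2)+1 from by omega, pow_succ, mul_comm]
    rw [h2]
    exact Nat.mul_le_mul (by omega) (ih (by omega))

lemma geom_bound : ∀ j : ℕ, (∑ k ∈ Finset.Icc 2 j, ((1:ℝ)/4)^k) ≤ 1/12 := by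
  intro j
  rcases Nat.lt_or_ge j 1 with h | h
  · interval_cases j
    · simp
  · have key : ∀ m, 1 ≤ m → (∑ k ∈ Finset.Icc 2 m, ((1:ℝ)/4)^k) = 1/12 - (1/3)*(1/4)^m := by
      intro m hm
      induction m, hm using Nat.le_induction with
      | base => norm_num
      | succ m hm ih =>
        rw [Finset.sum_Icc_succ_top (by omega), ih]
        ring
    rw [key j h]
    have : (0:ℝ) ≤ (1/3)*(1/4)^j := by positivity
    linarith


lemma comp_real {x q n k : ℕ} (hx : 2 ≤ x) (hq : 1 ≤ q) (hn : x^2*q*(q+2) ≤ n)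
    (hk2 : 2 ≤ k) (hkq : k ≤ q) :
    ((Nat.factorial (k-1) * (Nat.choose n x *
        (Nat.choose x 2 * Nat.choose (n-2) (x-2))^(k-1)) : ℕ) : ℝ)
      ≤ (1/2)^(k-1) * ((1:ℝ)/((q:ℝ)+2))^(k-2) *
        ((n:ℝ)^(x-1) * ((x:ℝ)^2 / (Nat.factorial x : ℝ)))^k := by
  obtain ⟨m, rfl⟩ : ∃ m, k = m + 2 := ⟨k - 2, by omega⟩
  have hn12 : 12 ≤ n := by
    have h4 : 4 ≤ x^2 := by
      calc 4 = 2^2 := rfl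
        _ ≤ x^2 := Nat.pow_le_pow_left hx 2
    have h12 : 12 ≤ x^2*q*(q+2) := by
      calc 12 = 4*1*3 := rfl
        _ ≤ x^2*q*(q+2) := Nat.mul_le_mul (Nat.mul_le_mul h4 hq) (by omega)
    omega
  have hNpos : (0:ℝ) < (n:ℝ) := by exact_mod_cast (by omega : 0 < n)
  have hXpos : (0:ℝ) < (x:ℝ) := by exact_mod_cast (by omega : 0 < x)
  have hX2 : (2:ℝ) ≤ (x:ℝ) := by exact_mod_cast hx
  have hFpos : (0:ℝ) < (Nat.factorial x : ℝ) := by exact_mod_cast Nat.factorial_pos x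
  have hGpos : (0:ℝ) < (Nat.factorial (x-2) : ℝ) := by exact_mod_cast Nat.factorial_pos (x-2)
  have hQpos : (0:ℝ) < (q:ℝ) + 2 := by positivity
  have hτpos : (0:ℝ) < (n:ℝ)^(x-1) * ((x:ℝ)^2 / (Nat.factorial x : ℝ)) := by positivity
  have epow1 : (n:ℝ)^x = (n:ℝ)^(x-1) * (n:ℝ) := by rw [← pow_succ]; congr 1; omega
  have epow2 : (n:ℝ)^(x-1) = (n:ℝ)^(x-2) * (n:ℝ) := by rw [← pow_succ]; congr 1; omega
  -- bound 1
  have b1 : (Nat.choose n x : ℝ) ≤ ((n:ℝ)^(x-1) * ((x:ℝ)^2 / (Nat.factorial x : ℝ))) *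
      ((n:ℝ) / (x:ℝ)^2) := by
    have h := Nat.choose_le_pow_div x n (α := ℝ)
    have e1 : ((n:ℝ)^(x-1) * ((x:ℝ)^2 / (Nat.factorial x : ℝ))) * ((n:ℝ) / (x:ℝ)^2)
        = (n:ℝ)^x / (Nat.factorial x : ℝ) := by
      rw [epow1]
      field_simp
    rw [e1]
    exact h
  -- bound 2
  have b2 : ((Nat.choose x 2 : ℝ) * (Nat.choose (n-2) (x-2) : ℝ))
      ≤ ((n:ℝ)^(x-1) * ((x:ℝ)^2 / (Nat.factorial x : ℝ))) * ((x:ℝ)^2 / (2*(n:ℝ))) := by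
    have a2 : (Nat.choose x 2 : ℝ) ≤ (x:ℝ)^2 / 2 := by
      have h := Nat.choose_le_pow_div 2 x (α := ℝ)
      simpa [Nat.factorial_two] using h
    have a3 : (Nat.choose (n-2) (x-2) : ℝ) ≤ (n:ℝ)^(x-2) / (Nat.factorial (x-2) : ℝ) := by
      have h := Nat.choose_le_pow_div (x-2) (n-2) (α := ℝ)
      refine h.trans ?_
      have hle : ((n-2 : ℕ):ℝ) ≤ (n:ℝ) := by exact_mod_cast (by omega : n-2 ≤ n)
      have hple : ((n-2 : ℕ):ℝ)^(x-2) ≤ (n:ℝ)^(x-2) := pow_le_pow_left₀ (by positivity) hle _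
      exact div_le_div_of_nonneg_right hple hGpos.le
    have hFG : (Nat.factorial x : ℝ) ≤ (x:ℝ)^2 * (Nat.factorial (x-2) : ℝ) := by
      obtain ⟨s, rfl⟩ : ∃ s, x = s + 2 := ⟨x - 2, by omega⟩
      have hnat : (s+2).factorial ≤ (s+2)^2 * (s+2-2).factorial := by
        have e : (s+2).factorial = (s+2) * ((s+1) * s.factorial) := by
          rw [Nat.factorial_succ, Nat.factorial_succ]
        rw [e, show (s+2)^2 = (s+2)*(s+2) from by ring, show s+2-2 = s from by omega,
          mul_assoc]
        exact Nat.mul_le_mul_left _ (Nat.mul_le_mul_right _ (by omega))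
      exact_mod_cast hnat
    have e2 : ((n:ℝ)^(x-1) * ((x:ℝ)^2 / (Nat.factorial x : ℝ))) * ((x:ℝ)^2 / (2*(n:ℝ)))
        = (n:ℝ)^(x-2) * ((x:ℝ)^4 / (2*(Nat.factorial x : ℝ))) := by
      rw [epow2]
      field_simp
    have step : ((Nat.choose x 2 : ℝ)) * (Nat.choose (n-2) (x-2) : ℝ)
        ≤ ((x:ℝ)^2/2) * ((n:ℝ)^(x-2)/(Nat.factorial (x-2) : ℝ)) :=
      mul_le_mul a2 a3 (Nat.cast_nonneg _) (by positivity)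
    have step2 : ((x:ℝ)^2/2) * ((n:ℝ)^(x-2)/(Nat.factorial (x-2) : ℝ))
        ≤ (n:ℝ)^(x-2) * ((x:ℝ)^4 / (2*(Nat.factorial x : ℝ))) := by
      rw [show ((x:ℝ)^2/2) * ((n:ℝ)^(x-2)/(Nat.factorial (x-2) : ℝ))
          = (n:ℝ)^(x-2) * ((x:ℝ)^2/(2*(Nat.factorial (x-2) : ℝ))) from by ring]
      refine mul_le_mul_of_nonneg_left ?_ (by positivity)
      rw [div_le_div_iff₀ (by positivity) (by positivity)]
      calc (x:ℝ)^2 * (2*(Nat.factorial x : ℝ))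
          ≤ (x:ℝ)^2 * (2*((x:ℝ)^2 * (Nat.factorial (x-2) : ℝ))) := by
            refine mul_le_mul_of_nonneg_left ?_ (by positivity)
            exact mul_le_mul_of_nonneg_left hFG (by norm_num)
        _ = (x:ℝ)^4 * (2*(Nat.factorial (x-2) : ℝ)) := by ring
    calc ((Nat.choose x 2 : ℝ)) * (Nat.choose (n-2) (x-2) : ℝ)
        ≤ ((x:ℝ)^2/2) * ((n:ℝ)^(x-2)/(Nat.factorial (x-2) : ℝ)) := step
      _ ≤ (n:ℝ)^(x-2) * ((x:ℝ)^4/(2*(Nat.factorial x : ℝ))) := step2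
      _ = _ := e2.symm
  -- factorial bound
  have bfact : (Nat.factorial (m+1) : ℝ) ≤ (q:ℝ)^m := by
    have h := fact_le_pow q (m+2) (by omega) hkq
    rw [show m+2-1 = m+1 from rfl, show m+2-2 = m from rfl] at h
    exact_mod_cast h
  -- base ratio bound
  have bratio : (q:ℝ) * ((x:ℝ)^2/(n:ℝ)) ≤ 1/((q:ℝ)+2) := by
    have e : (q:ℝ) * ((x:ℝ)^2/(n:ℝ)) = ((q:ℝ)*(x:ℝ)^2)/(n:ℝ) := by ring
    rw [e, div_le_div_iff₀ hNpos hQpos]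
    have hcast : (x:ℝ)^2 * (q:ℝ) * ((q:ℝ)+2) ≤ (n:ℝ) := by exact_mod_cast hn
    nlinarith [hcast]
  -- assemble
  push_cast
  have main : (Nat.factorial (m+1) : ℝ) * ((Nat.choose n x : ℝ) *
      ((Nat.choose x 2 : ℝ) * (Nat.choose (n-2) (x-2) : ℝ))^(m+1))
      ≤ (Nat.factorial (m+1) : ℝ) *
        ((((n:ℝ)^(x-1) * ((x:ℝ)^2 / (Nat.factorial x : ℝ))) * ((n:ℝ)/(x:ℝ)^2)) *
         (((n:ℝ)^(x-1) * ((x:ℝ)^2 / (Nat.factorial x : ℝ))) * ((x:ℝ)^2/(2*(n:ℝ))))^(m+1)) := by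
    refine mul_le_mul_of_nonneg_left ?_ (by positivity)
    have hpow := pow_le_pow_left₀ (by positivity) b2 (m+1)
    have h0c : (0:ℝ) ≤ ((Nat.choose x 2:ℝ)*((Nat.choose (n-2) (x-2)):ℝ))^(m+1) := by positivity
    have h0b : (0:ℝ) ≤ ((n:ℝ)^(x-1) * ((x:ℝ)^2 / (Nat.factorial x : ℝ))) * ((n:ℝ)/(x:ℝ)^2) := by
      positivity
    exact mul_le_mul b1 hpow h0c h0b
  refine le_trans main ?_
  have habs : ((n:ℝ)/(x:ℝ)^2) * ((x:ℝ)^2/(2*(n:ℝ))) = 1/2 := by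
    field_simp
  have hhalf : (x:ℝ)^2/(2*(n:ℝ)) = (1/2) * ((x:ℝ)^2/(n:ℝ)) := by
    field_simp
  have key : (Nat.factorial (m+1) : ℝ) *
        ((((n:ℝ)^(x-1) * ((x:ℝ)^2 / (Nat.factorial x : ℝ))) * ((n:ℝ)/(x:ℝ)^2)) *
         (((n:ℝ)^(x-1) * ((x:ℝ)^2 / (Nat.factorial x : ℝ))) * ((x:ℝ)^2/(2*(n:ℝ))))^(m+1))
      = ((n:ℝ)^(x-1) * ((x:ℝ)^2 / (Nat.factorial x : ℝ)))^(m+2) *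
          ((1/2)^(m+1) * ((Nat.factorial (m+1) : ℝ) * ((x:ℝ)^2/(n:ℝ))^m)) := by
    calc (Nat.factorial (m+1) : ℝ) *
        ((((n:ℝ)^(x-1) * ((x:ℝ)^2 / (Nat.factorial x : ℝ))) * ((n:ℝ)/(x:ℝ)^2)) *
         (((n:ℝ)^(x-1) * ((x:ℝ)^2 / (Nat.factorial x : ℝ))) * ((x:ℝ)^2/(2*(n:ℝ))))^(m+1))
        = (Nat.factorial (m+1) : ℝ) *
            (((n:ℝ)^(x-1) * ((x:ℝ)^2 / (Nat.factorial x : ℝ)))^(m+2) *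
             (((x:ℝ)^2/(2*(n:ℝ)))^m * (((n:ℝ)/(x:ℝ)^2) * ((x:ℝ)^2/(2*(n:ℝ)))))) := by
          ring
      _ = (Nat.factorial (m+1) : ℝ) *
            (((n:ℝ)^(x-1) * ((x:ℝ)^2 / (Nat.factorial x : ℝ)))^(m+2) *
             ((((1:ℝ)/2) * ((x:ℝ)^2/(n:ℝ)))^m * (1/2))) := by
          rw [habs, hhalf]
      _ = _ := by
          rw [mul_pow]
          ring
  rw [key]
  have hfinal : (Nat.factorial (m+1) : ℝ) * ((x:ℝ)^2/(n:ℝ))^m ≤ (1/((q:ℝ)+2))^m := by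
    calc (Nat.factorial (m+1) : ℝ) * ((x:ℝ)^2/(n:ℝ))^m
        ≤ (q:ℝ)^m * ((x:ℝ)^2/(n:ℝ))^m := mul_le_mul_of_nonneg_right bfact (by positivity)
      _ = ((q:ℝ) * ((x:ℝ)^2/(n:ℝ)))^m := (mul_pow _ _ _).symm
      _ ≤ (1/((q:ℝ)+2))^m := pow_le_pow_left₀ (by positivity) bratio m
  calc ((n:ℝ)^(x-1) * ((x:ℝ)^2 / (Nat.factorial x : ℝ)))^(m+2) *
          ((1/2)^(m+1) * ((Nat.factorial (m+1) : ℝ) * ((x:ℝ)^2/(n:ℝ))^m))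
      ≤ ((n:ℝ)^(x-1) * ((x:ℝ)^2 / (Nat.factorial x : ℝ)))^(m+2) *
          ((1/2)^(m+1) * (1/((q:ℝ)+2))^m) := by
        refine mul_le_mul_of_nonneg_left ?_ (by positivity)
        exact mul_le_mul_of_nonneg_left hfinal (by positivity)
    _ = (1/2)^(m+2-1) * ((1:ℝ)/((q:ℝ)+2))^(m+2-2) *
          ((n:ℝ)^(x-1) * ((x:ℝ)^2 / (Nat.factorial x : ℝ)))^(m+2) := by
        rw [show m+2-1 = m+1 from rfl, show m+2-2 = m from rfl]
        ring


lemma comp_count_real {x q n : ℕ} (hx : 2 ≤ x) (hq : 1 ≤ q) (hn : x^2*q*(q+2) ≤ n)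
    {k : ℕ} (hk2 : 2 ≤ k) (hkq : k ≤ q) :
    (Nat.card (Comp n x k) : ℝ) ≤ (1/2)^(k-1) * ((1:ℝ)/((q:ℝ)+2))^(k-2) *
      ((n:ℝ)^(x-1) * ((x:ℝ)^2 / (Nat.factorial x : ℝ)))^k := by
  have h1 : Nat.card (Comp n x k) ≤ Nat.factorial (k-1) * (Nat.choose n x *
      (Nat.choose x 2 * Nat.choose (n-2) (x-2))^(k-1)) :=
    le_trans (comp_le_CT hx k) (card_CT k (by omega))
  calc (Nat.card (Comp n x k) : ℝ)
      ≤ ((Nat.factorial (k-1) * (Nat.choose n x *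
          (Nat.choose x 2 * Nat.choose (n-2) (x-2))^(k-1)) : ℕ) : ℝ) := by exact_mod_cast h1
    _ ≤ _ := comp_real hx hq hn hk2 hkq

lemma beta_sum {q : ℕ} (j : ℕ) :
    (∑ k ∈ Finset.Icc 2 j, (1/2:ℝ)^(k-1) * ((1:ℝ)/((q:ℝ)+2))^(k-2)) ≤ 1 := by
  have hterm : ∀ k ∈ Finset.Icc 2 j,
      (1/2:ℝ)^(k-1) * ((1:ℝ)/((q:ℝ)+2))^(k-2) ≤ 8 * (1/4:ℝ)^k := by
    intro k hk
    rw [Finset.mem_Icc] at hk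
    obtain ⟨i, rfl⟩ : ∃ i, k = i + 2 := ⟨k - 2, by omega⟩
    have hq2 : ((1:ℝ)/((q:ℝ)+2)) ≤ 1/2 := by
      rw [div_le_div_iff₀ (by positivity) (by norm_num)]
      have : (0:ℝ) ≤ (q:ℝ) := Nat.cast_nonneg q
      linarith
    have hp : ((1:ℝ)/((q:ℝ)+2))^(i+2-2) ≤ (1/2:ℝ)^i := by
      rw [show i+2-2 = i from rfl]
      exact pow_le_pow_left₀ (by positivity) hq2 i
    calc (1/2:ℝ)^(i+2-1) * ((1:ℝ)/((q:ℝ)+2))^(i+2-2)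
        ≤ (1/2:ℝ)^(i+1) * (1/2:ℝ)^i := by
          rw [show i+2-1 = i+1 from rfl]
          exact mul_le_mul_of_nonneg_left hp (by positivity)
      _ = 8 * (1/4:ℝ)^(i+2) := by
          rw [show (1/4:ℝ) = (1/2:ℝ)^2 from by norm_num, ← pow_mul, ← pow_add,
            show 2*(i+2) = (i+1+i)+3 from by ring, pow_add]
          ring
  calc (∑ k ∈ Finset.Icc 2 j, (1/2:ℝ)^(k-1) * ((1:ℝ)/((q:ℝ)+2))^(k-2))
      ≤ ∑ k ∈ Finset.Icc 2 j, 8 * (1/4:ℝ)^k := Finset.sum_le_sum hterm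
    _ = 8 * ∑ k ∈ Finset.Icc 2 j, (1/4:ℝ)^k := by rw [Finset.mul_sum]
    _ ≤ 8 * (1/12) := by
        refine mul_le_mul_of_nonneg_left (geom_bound j) (by norm_num)
    _ ≤ 1 := by norm_num

lemma good_real {x q n : ℕ} (hx : 2 ≤ x) (hq : 1 ≤ q) (hn : x^2*q*(q+2) ≤ n) :
    ∀ j, j ≤ q → (Nat.card (Good n x j) : ℝ) ≤
      ((n:ℝ)^(x-1) * ((x:ℝ)^2 / (Nat.factorial x : ℝ)))^j := by
  intro j
  induction j using Nat.strong_induction_on with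
  | _ j ih =>
    intro hjq
    rcases Nat.eq_zero_or_pos j with rfl | hj1
    · rw [good_zero]
      norm_num
    · have hτ0 : (0:ℝ) ≤ (n:ℝ)^(x-1) * ((x:ℝ)^2 / (Nat.factorial x : ℝ)) := by positivity
      have hrec := good_rec (n := n) hx j hj1
      have hcast : (Nat.card (Good n x j) : ℝ) ≤
          ∑ k ∈ Finset.Icc 2 j, (Nat.card (Comp n x k) : ℝ) *
            (Nat.card (Good n x (j - k)) : ℝ) := by
        have := Nat.cast_le (α := ℝ).2 hrec
        push_cast at this
        exact this
      refine hcast.trans ?_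
      have hstep : ∀ k ∈ Finset.Icc 2 j,
          (Nat.card (Comp n x k) : ℝ) * (Nat.card (Good n x (j - k)) : ℝ) ≤
            ((1/2:ℝ)^(k-1) * ((1:ℝ)/((q:ℝ)+2))^(k-2)) *
              ((n:ℝ)^(x-1) * ((x:ℝ)^2 / (Nat.factorial x : ℝ)))^j := by
        intro k hk
        rw [Finset.mem_Icc] at hk
        have hc := comp_count_real hx hq hn hk.1 (le_trans hk.2 hjq)
        have hg := ih (j - k) (by omega) (by omega)
        calc (Nat.card (Comp n x k) : ℝ) * (Nat.card (Good n x (j - k)) : ℝ)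
            ≤ ((1/2:ℝ)^(k-1) * ((1:ℝ)/((q:ℝ)+2))^(k-2) *
                ((n:ℝ)^(x-1) * ((x:ℝ)^2 / (Nat.factorial x : ℝ)))^k) *
              ((n:ℝ)^(x-1) * ((x:ℝ)^2 / (Nat.factorial x : ℝ)))^(j-k) := by
              refine mul_le_mul hc hg (Nat.cast_nonneg _) ?_
              positivity
          _ = ((1/2:ℝ)^(k-1) * ((1:ℝ)/((q:ℝ)+2))^(k-2)) *
                ((n:ℝ)^(x-1) * ((x:ℝ)^2 / (Nat.factorial x : ℝ)))^j := by
              rw [mul_assoc, ← pow_add, show k + (j-k) = j from by omega]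
      calc (∑ k ∈ Finset.Icc 2 j, (Nat.card (Comp n x k) : ℝ) *
              (Nat.card (Good n x (j - k)) : ℝ))
          ≤ ∑ k ∈ Finset.Icc 2 j, ((1/2:ℝ)^(k-1) * ((1:ℝ)/((q:ℝ)+2))^(k-2)) *
              ((n:ℝ)^(x-1) * ((x:ℝ)^2 / (Nat.factorial x : ℝ)))^j :=
            Finset.sum_le_sum hstep
        _ = (∑ k ∈ Finset.Icc 2 j, (1/2:ℝ)^(k-1) * ((1:ℝ)/((q:ℝ)+2))^(k-2)) *
              ((n:ℝ)^(x-1) * ((x:ℝ)^2 / (Nat.factorial x : ℝ)))^j := by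
            rw [Finset.sum_mul]
        _ ≤ 1 * ((n:ℝ)^(x-1) * ((x:ℝ)^2 / (Nat.factorial x : ℝ)))^j := by
            refine mul_le_mul_of_nonneg_right (beta_sum j) (by positivity)
        _ = _ := one_mul _

end Overlap

/-- Let `x ≥ 2`, `q ≥ 1`, and `n ≥ x²·q·(q+2)`. The number of
multisets `S = {V₁,…,V_q}` of cardinality `q` whose elements are `x`-element subsets of
`[n]`, such that for every `j` there is an `i ≠ j` with `|V_i ∩ V_j| ≥ 2` (equivalently:
every member `V` of `S` shares at least two vertices with some other member of `S`,
counted with multiplicity), is at most `2·n^{xq−q}·(x²/x!)^q`. -/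
theorem overlapping_clique_multiset_count (x q n : ℕ) (hx : 2 ≤ x) (hq : 1 ≤ q)
    (hn : x ^ 2 * q * (q + 2) ≤ n) :
    (Nat.card {S : Multiset (Finset (Fin n)) //
        Multiset.card S = q ∧
        (∀ V ∈ S, V.card = x) ∧
        (∀ V ∈ S, ∃ W ∈ S.erase V, 2 ≤ (V ∩ W).card)} : ℝ)
      ≤ 2 * (n : ℝ) ^ (x * q - q) * ((x : ℝ) ^ 2 / (Nat.factorial x : ℝ)) ^ q := by
  have hcard : Nat.card {S : Multiset (Finset (Fin n)) //
      Multiset.card S = q ∧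
      (∀ V ∈ S, V.card = x) ∧
      (∀ V ∈ S, ∃ W ∈ S.erase V, 2 ≤ (V ∩ W).card)} = Nat.card (Overlap.Good n x q) := rfl
  rw [hcard]
  have h := Overlap.good_real hx hq hn q le_rfl
  refine h.trans ?_
  have e : ((n:ℝ)^(x-1) * ((x:ℝ)^2 / (Nat.factorial x : ℝ)))^q
      = (n : ℝ) ^ (x * q - q) * ((x : ℝ) ^ 2 / (Nat.factorial x : ℝ)) ^ q := by
    have hexp : (x-1)*q = x*q - q := by rw [Nat.sub_mul, one_mul]
    rw [mul_pow, ← pow_mul, hexp]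
  rw [e]
  have hpos : (0:ℝ) ≤ (n : ℝ) ^ (x * q - q) * ((x : ℝ) ^ 2 / (Nat.factorial x : ℝ)) ^ q := by
    positivity
  nlinarith [hpos]
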